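/- For any Lie groupoid Γ ⇉ Γ₀, the category of principal G-bundles over Γ ⇉ Γ₀ is equivalent to the category of generalized homomorphisms from Γ ⇉ Γ₀ to G ⇉ · . Consequently, if Γ' and Γ are Morita equivalent Lie groupoids, there is an equivalence between the category of principal G-bundles over Γ' and the category of principal G-bundles over Γ. -/

import Mathlib

/-!
Shared abstract framework for "Chern-Weil map for principal bundles over groupoids"
(Laurent-Gengoux, Tu, Xu).  Smooth structures are abstracted away: a Lie groupoid is
modelled by its underlying (set-level) groupoid, and the de Rham functor is modelled
by an abstract contravariant functor of graded-commutative differential algebras.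
-/

open scoped TensorProduct

noncomputable section

/-- A (Lie) groupoid `Γ ⇉ Γ₀`; `s` is the source (`β`), `t` is the target (`α`). -/
structure Gpd where
  O : Type
  M : Type
  s : M → O
  t : M → O
  comp : ∀ g h : M, s g = t h → M
  unit : O → M
  inv : M → M
  s_comp : ∀ g h hc, s (comp g h hc) = s h
  t_comp : ∀ g h hc, t (comp g h hc) = t g
  s_unit : ∀ x, s (unit x) = x
  t_unit : ∀ x, t (unit x) = x
  s_inv : ∀ g, s (inv g) = t g
  t_inv : ∀ g, t (inv g) = s g
  comp_assoc : ∀ g h k (hgh : s g = t h) (hhk : s h = t k),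
    comp (comp g h hgh) k ((s_comp g h hgh).trans hhk) =
      comp g (comp h k hhk) (hgh.trans (t_comp h k hhk).symm)
  unit_comp : ∀ g, comp (unit (t g)) g (s_unit (t g)) = g
  comp_unit : ∀ g, comp g (unit (s g)) (t_unit (s g)).symm = g
  inv_comp : ∀ g, comp (inv g) g (s_inv g) = unit (s g)
  comp_inv : ∀ g, comp g (inv g) (t_inv g).symm = unit (t g)

/-- A principal `G`-bundle datum `P → B` (right `G`-action covering `proj`). -/
structure PrinBundle (G : Type) [Group G] (P B : Type) where
  proj : P → B
  act : P → G → P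
  act_one : ∀ p, act p 1 = p
  act_mul : ∀ p g h, act (act p g) h = act p (g * h)
  proj_act : ∀ p g, proj (act p g) = proj p

/-- Principality: `proj` is onto and `G` acts freely and transitively on fibres. -/
def PrinBundle.IsPrincipal {G P B : Type} [Group G] (Bd : PrinBundle G P B) : Prop :=
  Function.Surjective Bd.proj ∧ ∀ p q, Bd.proj p = Bd.proj q → ∃! g, Bd.act p g = q

/-- A principal `G`-bundle over the groupoid `Γ ⇉ Γ₀`: a principal `G`-bundle
`P → Γ₀` together with a left `Γ`-action commuting with the `G`-action. -/
structure GpdBundle (G : Type) [Group G] (Γ : Gpd) (P : Type)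
    extends PrinBundle G P Γ.O where
  gact : ∀ (γ : Γ.M) (p : P), Γ.s γ = proj p → P
  gact_proj : ∀ γ p h, proj (gact γ p h) = Γ.t γ
  gact_unit : ∀ p, gact (Γ.unit (proj p)) p (Γ.s_unit _) = p
  gact_comp : ∀ γ₁ γ₂ p (h₁ : Γ.s γ₁ = Γ.t γ₂) (h₂ : Γ.s γ₂ = proj p),
    gact γ₁ (gact γ₂ p h₂) (h₁.trans (gact_proj γ₂ p h₂).symm)
      = gact (Γ.comp γ₁ γ₂ h₁) p ((Γ.s_comp γ₁ γ₂ h₁).trans h₂)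
  gact_act : ∀ γ p g (h : Γ.s γ = proj p),
    gact γ (act p g) (h.trans (proj_act p g).symm) = act (gact γ p h) g

/-- Carrier of an abstract "differential forms" functor. -/
structure FormsCarrier where
  Ω : Type → Type
  ringΩ : ∀ X, Ring (Ω X)

attribute [instance] FormsCarrier.ringΩ

structure FormsCarrier₂ extends FormsCarrier where
  algΩ : ∀ X, Algebra ℝ (Ω X)

attribute [instance] FormsCarrier₂.algΩ

/-- An abstract de Rham functor: to each space `X` a graded-commutative differential
`ℝ`-algebra `Ω X`, contravariantly functorial in `X`. -/
structure FormsTheory extends FormsCarrier₂ where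
  d : ∀ X : Type, Ω X →ₗ[ℝ] Ω X
  pull : ∀ {X Y : Type}, (X → Y) → (Ω Y →ₐ[ℝ] Ω X)
  gr : ∀ X : Type, ℕ → Submodule ℝ (Ω X)
  d_d : ∀ (X : Type) ω, d X (d X ω) = 0
  d_one : ∀ X : Type, d X 1 = 0
  pull_id : ∀ (X : Type) ω, pull (id : X → X) ω = ω
  pull_comp : ∀ {X Y Z : Type} (f : X → Y) (g : Y → Z) ω,
    pull (g ∘ f) ω = pull f (pull g ω)
  pull_d : ∀ {X Y : Type} (f : X → Y) ω, pull f (d Y ω) = d X (pull f ω)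
  d_gr : ∀ (X : Type) k ω, ω ∈ gr X k → d X ω ∈ gr X (k + 1)
  mul_gr : ∀ (X : Type) k l a b, a ∈ gr X k → b ∈ gr X l → a * b ∈ gr X (k + l)
  pull_gr : ∀ {X Y : Type} (f : X → Y) k ω, ω ∈ gr Y k → pull f ω ∈ gr X k
  one_gr : ∀ X : Type, (1 : Ω X) ∈ gr X 0
  comm_gr : ∀ (X : Type) k l a b, a ∈ gr X k → b ∈ gr X l →
    a * b = ((-1 : ℝ) ^ (k * l)) • (b * a)

/-- Degree-`k` part of the `𝔤`-valued forms `Ω X ⊗ 𝔤`. -/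
def grT (F : FormsTheory) (X : Type) (𝔤 : Type) [AddCommGroup 𝔤] [Module ℝ 𝔤] (k : ℕ) :
    Submodule ℝ (F.Ω X ⊗[ℝ] 𝔤) :=
  LinearMap.range (TensorProduct.map (F.gr X k).subtype (LinearMap.id (M := 𝔤)))

/-- Pull-back of `𝔤`-valued forms. -/
def pullT (F : FormsTheory) {X Y : Type} (f : X → Y)
    (𝔤 : Type) [AddCommGroup 𝔤] [Module ℝ 𝔤] :
    F.Ω Y ⊗[ℝ] 𝔤 →ₗ[ℝ] F.Ω X ⊗[ℝ] 𝔤 :=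
  LinearMap.rTensor 𝔤 (F.pull f).toLinearMap

attribute [local instance 100] LieRing.ofAssociativeRing

/-- The bracket `[ω₁ ⊗ X₁, ω₂ ⊗ X₂] = (ω₁ ∧ ω₂) ⊗ [X₁, X₂]` on `A ⊗ 𝔤`. -/
def brT (A : Type) [Ring A] [Algebra ℝ A] (𝔤 : Type) [LieRing 𝔤] [LieAlgebra ℝ 𝔤] :
    A ⊗[ℝ] 𝔤 →ₗ[ℝ] A ⊗[ℝ] 𝔤 →ₗ[ℝ] A ⊗[ℝ] 𝔤 :=
  TensorProduct.curry
    ((TensorProduct.map (LinearMap.mul' ℝ A)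
        (TensorProduct.lift ((LieAlgebra.ad ℝ 𝔤).toLinearMap))).comp
      (TensorProduct.tensorTensorTensorComm ℝ A 𝔤 A 𝔤).toLinearMap)

/-- Contraction operators `i_X` by the fundamental vector fields of the `G`-action
(the `G`-differential algebra structure on `Ω P`). -/
structure ContractionData (F : FormsTheory) (𝔤 : Type) [AddCommGroup 𝔤] [Module ℝ 𝔤]
    (P : Type) where
  i : 𝔤 → (F.Ω P →ₗ[ℝ] F.Ω P)
  i_anticomm : ∀ X Y ω, i X (i Y ω) + i Y (i X ω) = 0

/-- A pseudo-connection: a connection 1-form `θ ∈ Ω¹(P) ⊗ 𝔤` for the `G`-bundle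
`P → Γ₀`, forgetting the `Γ`-action: `θ` has degree 1, `i_X θ = 1 ⊗ X`, and `θ` is
`G`-equivariant (`R_g^* θ = Ad_{g⁻¹} θ`). -/
def IsPseudoConn (G : Type) [Group G] (𝔤 : Type) [LieRing 𝔤] [LieAlgebra ℝ 𝔤]
    (Ad : G →* Module.End ℝ 𝔤) {Γ : Gpd} {P : Type}
    (F : FormsTheory) (B : GpdBundle G Γ P) (cd : ContractionData F 𝔤 P)
    (θ : F.Ω P ⊗[ℝ] 𝔤) : Prop :=
  θ ∈ grT F P 𝔤 1 ∧
  (∀ X : 𝔤, LinearMap.rTensor 𝔤 (cd.i X) θ = (1 : F.Ω P) ⊗ₜ[ℝ] X) ∧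
  (∀ g : G, pullT F (fun p => B.act p g) 𝔤 θ = LinearMap.lTensor (F.Ω P) (Ad g⁻¹) θ)

/-- Space of the transformation groupoid `Q = Γ ×_{Γ₀} P ⇉ P`. -/
def QSp {G : Type} [Group G] {Γ : Gpd} {P : Type} (B : GpdBundle G Γ P) : Type :=
  {x : Γ.M × P // Γ.s x.1 = B.proj x.2}

/-- Source map `β(γ, p) = p` of the transformation groupoid. -/
def Qbeta {G : Type} [Group G] {Γ : Gpd} {P : Type} (B : GpdBundle G Γ P) :
    QSp B → P := fun x => x.1.2

/-- Target map `α(γ, p) = γ · p` of the transformation groupoid. -/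
def Qalpha {G : Type} [Group G] {Γ : Gpd} {P : Type} (B : GpdBundle G Γ P) :
    QSp B → P := fun x => B.gact x.1.1 x.1.2 x.2

/-- The simplicial differential `∂ = β^* - α^*` (with respect to the transformation
groupoid `Q ⇉ P`), on `𝔤`-valued forms. -/
def partialT {G : Type} [Group G] {Γ : Gpd} {P : Type}
    (F : FormsTheory) (𝔤 : Type) [AddCommGroup 𝔤] [Module ℝ 𝔤] (B : GpdBundle G Γ P) :
    F.Ω P ⊗[ℝ] 𝔤 →ₗ[ℝ] F.Ω (QSp B) ⊗[ℝ] 𝔤 :=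
  pullT F (Qbeta B) 𝔤 - pullT F (Qalpha B) 𝔤

/-- The curvature `Ω = dθ + ½ [θ, θ]` of a pseudo-connection. -/
def curv (F : FormsTheory) {P : Type} (𝔤 : Type) [LieRing 𝔤] [LieAlgebra ℝ 𝔤]
    (θ : F.Ω P ⊗[ℝ] 𝔤) : F.Ω P ⊗[ℝ] 𝔤 :=
  LinearMap.rTensor 𝔤 (F.d P) θ + (1 / 2 : ℝ) • (brT (F.Ω P) 𝔤 θ θ)

/-- Pairs of composable arrows: level 2 of the nerve of `Γ`. -/
def N2 (Γ : Gpd) : Type := {x : Γ.M × Γ.M // Γ.s x.1 = Γ.t x.2}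

def n2e0 (Γ : Gpd) : N2 Γ → Γ.M := fun x => x.1.2
def n2e1 (Γ : Gpd) : N2 Γ → Γ.M := fun x => Γ.comp x.1.1 x.1.2 x.2
def n2e2 (Γ : Gpd) : N2 Γ → Γ.M := fun x => x.1.1

/-- The total de Rham complex `(Ω(Γ_•), δ = (-1)^p d + ∂, ∨)` of the nerve of a
groupoid with objects `X0`, arrows `X1` (source `β`, target `α`) and composable
pairs `X2` (face maps `e0, e1, e2`), hypothesised abstractly: an `ℝ`-algebra `T`
under the cup product, with total differential `δ` and with the inclusions of the
low columns satisfying the defining relations of the double complex. -/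
structure NerveDR (F : FormsTheory) (X0 X1 X2 : Type)
    (β α : X1 → X0) (e0 e1 e2 : X2 → X1) where
  T : Type
  ringT : Ring T
  algT : Algebra ℝ T
  δ : T →ₗ[ℝ] T
  δ_δ : ∀ a, δ (δ a) = 0
  δ_one : δ 1 = 0
  δ_mul_closed : ∀ a b, δ a = 0 → δ b = 0 → δ (a * b) = 0
  ι0 : F.Ω X0 →ₗ[ℝ] T
  ι1 : F.Ω X1 →ₗ[ℝ] T
  ι2 : F.Ω X2 →ₗ[ℝ] T
  ι0_injective : Function.Injective ι0
  ι0_one : ι0 1 = 1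
  ι0_mul : ∀ a b, ι0 a * ι0 b = ι0 (a * b)
  δ_ι0 : ∀ ω, δ (ι0 ω) = ι0 (F.d X0 ω) + ι1 (F.pull β ω - F.pull α ω)
  δ_ι1 : ∀ ω, δ (ι1 ω) = - ι1 (F.d X1 ω) +
    ι2 (F.pull e0 ω - F.pull e1 ω + F.pull e2 ω)
  cup01 : ∀ (k : ℕ) (a : F.Ω X0) (b : F.Ω X1), a ∈ F.gr X0 k →
    ι0 a * ι1 b = ((-1 : ℝ) ^ k) • ι1 (F.pull α a * b)
  cup10 : ∀ (a : F.Ω X1) (b : F.Ω X0), ι1 a * ι0 b = ι1 (a * F.pull β b)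

attribute [instance] NerveDR.ringT NerveDR.algT

/-- The de Rham double complex of the nerve `Γ_•` of a groupoid `Γ`. -/
abbrev GpdDR (F : FormsTheory) (Γ : Gpd) :=
  NerveDR F Γ.O Γ.M (N2 Γ) Γ.s Γ.t (n2e0 Γ) (n2e1 Γ) (n2e2 Γ)

/-- Closed forms `Z^*` of the total complex, as a subalgebra. -/
def ZSub {F : FormsTheory} {X0 X1 X2 : Type} {β α : X1 → X0} {e0 e1 e2 : X2 → X1}
    (D : NerveDR F X0 X1 X2 β α e0 e1 e2) : Subalgebra ℝ D.T where
  carrier := {a | D.δ a = 0}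
  mul_mem' := fun ha hb => D.δ_mul_closed _ _ ha hb
  one_mem' := D.δ_one
  add_mem' := fun {a b} ha hb => by
    have ha' : D.δ a = 0 := ha
    have hb' : D.δ b = 0 := hb
    show D.δ (a + b) = 0
    rw [map_add, ha', hb', add_zero]
  zero_mem' := by simp
  algebraMap_mem' := fun r => by
    show D.δ _ = 0
    rw [Algebra.algebraMap_eq_smul_one, map_smul, D.δ_one, smul_zero]

theorem mem_ZSub {F : FormsTheory} {X0 X1 X2 : Type} {β α : X1 → X0}
    {e0 e1 e2 : X2 → X1} {D : NerveDR F X0 X1 X2 β α e0 e1 e2} {a : D.T} :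
    a ∈ ZSub D ↔ D.δ a = 0 := Iff.rfl

/-- Two closed forms are identified in cohomology iff they differ by a coboundary. -/
def exRel {F : FormsTheory} {X0 X1 X2 : Type} {β α : X1 → X0} {e0 e1 e2 : X2 → X1}
    (D : NerveDR F X0 X1 X2 β α e0 e1 e2) : ↥(ZSub D) → ↥(ZSub D) → Prop :=
  fun a b => ∃ c : D.T, (a : D.T) - b = D.δ c

/-- The de Rham cohomology ring `H^*` of the total complex. -/
def Hcoh {F : FormsTheory} {X0 X1 X2 : Type} {β α : X1 → X0} {e0 e1 e2 : X2 → X1}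
    (D : NerveDR F X0 X1 X2 β α e0 e1 e2) : Type :=
  RingQuot (exRel D)

instance {F : FormsTheory} {X0 X1 X2 : Type} {β α : X1 → X0} {e0 e1 e2 : X2 → X1}
    (D : NerveDR F X0 X1 X2 β α e0 e1 e2) : Ring (Hcoh D) := by
  unfold Hcoh; infer_instance

instance {F : FormsTheory} {X0 X1 X2 : Type} {β α : X1 → X0} {e0 e1 e2 : X2 → X1}
    (D : NerveDR F X0 X1 X2 β α e0 e1 e2) : Algebra ℝ (Hcoh D) := by
  unfold Hcoh; infer_instance

/-- Projection from closed forms onto cohomology classes. -/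
def toH {F : FormsTheory} {X0 X1 X2 : Type} {β α : X1 → X0} {e0 e1 e2 : X2 → X1}
    (D : NerveDR F X0 X1 X2 β α e0 e1 e2) : ↥(ZSub D) →ₐ[ℝ] Hcoh D :=
  RingQuot.mkAlgHom ℝ (exRel D)

/-- Polynomial functions on `𝔤`: the subalgebra of `𝔤 → ℝ` generated by the linear
functionals (i.e. `S(𝔤^*)` realised as functions). -/
def polySub (𝔤 : Type) [AddCommGroup 𝔤] [Module ℝ 𝔤] : Subalgebra ℝ (𝔤 → ℝ) :=
  Algebra.adjoin ℝ {f : 𝔤 → ℝ | ∃ l : 𝔤 →ₗ[ℝ] ℝ, f = ⇑l}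

/-- `Ad`-invariant functions on `𝔤`. -/
def invSub (G : Type) [Group G] (𝔤 : Type) [AddCommGroup 𝔤] [Module ℝ 𝔤]
    (Ad : G →* Module.End ℝ 𝔤) : Subalgebra ℝ (𝔤 → ℝ) where
  carrier := {f | ∀ (g : G) (x : 𝔤), f (Ad g x) = f x}
  mul_mem' := fun hf hg g x => by simp only [Pi.mul_apply, hf g x, hg g x]
  one_mem' := fun g x => rfl
  add_mem' := fun hf hg g x => by simp only [Pi.add_apply, hf g x, hg g x]
  zero_mem' := fun g x => rfl
  algebraMap_mem' := fun r g x => rfl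

/-- The algebra `S(𝔤^*)^G` of `G`-invariant polynomials on `𝔤`. -/
def invPoly (G : Type) [Group G] (𝔤 : Type) [AddCommGroup 𝔤] [Module ℝ 𝔤]
    (Ad : G →* Module.End ℝ 𝔤) : Subalgebra ℝ (𝔤 → ℝ) :=
  polySub 𝔤 ⊓ invSub G 𝔤 Ad

/-- A Chern-Weil system for a principal `G`-bundle over a groupoid: for every
pseudo-connection `θ` a cochain-level map `z_θ : S(𝔤^*)^G → Z^*(Γ_•)` with values in
closed forms, all inducing one and the same algebra homomorphism
`w : S(𝔤^*)^G → H^*(Γ_•)` on cohomology (independence of the pseudo-connection). -/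
structure CWSystem (G : Type) [Group G] (𝔤 : Type) [LieRing 𝔤] [LieAlgebra ℝ 𝔤]
    (Ad : G →* Module.End ℝ 𝔤) {Γ : Gpd} {P : Type}
    (F : FormsTheory) (B : GpdBundle G Γ P) (cd : ContractionData F 𝔤 P)
    (D : GpdDR F Γ) where
  z : ∀ θ : F.Ω P ⊗[ℝ] 𝔤, IsPseudoConn G 𝔤 Ad F B cd θ →
    (↥(invPoly G 𝔤 Ad) → ↥(ZSub D))
  w : ↥(invPoly G 𝔤 Ad) →ₐ[ℝ] Hcoh D
  z_w : ∀ θ hθ f, toH D (z θ hθ f) = w f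

end

noncomputable section

open CategoryTheory

/-- The category of principal `G`-bundles over the groupoid `Γ ⇉ Γ₀`. -/
structure BdlObj (G : Type) [Group G] (Γ : Gpd) where
  P : Type
  B : GpdBundle G Γ P
  hB : B.toPrinBundle.IsPrincipal

instance bdlCategory (G : Type) [Group G] (Γ : Gpd) : Category (BdlObj G Γ) where
  Hom A₁ A₂ := {f : A₁.P → A₂.P //
    (∀ p, A₂.B.proj (f p) = A₁.B.proj p) ∧
    (∀ p g, f (A₁.B.act p g) = A₂.B.act (f p) g) ∧
    (∀ γ p (h : Γ.s γ = A₁.B.proj p) (h' : Γ.s γ = A₂.B.proj (f p)),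
      f (A₁.B.gact γ p h) = A₂.B.gact γ (f p) h')}
  id A := ⟨id, fun _ => rfl, fun _ _ => rfl, fun _ _ _ _ => rfl⟩
  comp {A₁ A₂ A₃} f g := ⟨g.1 ∘ f.1,
    fun p => (g.2.1 (f.1 p)).trans (f.2.1 p),
    fun p gg => by dsimp; rw [f.2.2.1, g.2.2.1],
    fun γ p h h' => by
      dsimp
      rw [f.2.2.2 γ p h (h.trans (f.2.1 p).symm),
        g.2.2.2 γ (f.1 p) (h.trans (f.2.1 p).symm) h']⟩
  id_comp _ := Subtype.ext rfl
  comp_id _ := Subtype.ext rfl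
  assoc _ _ _ := Subtype.ext rfl

/-- A Lie group `G`, regarded as the one-object groupoid `G ⇉ ·`. -/
def groupGpd (G : Type) [Group G] : Gpd where
  O := Unit
  M := G
  s _ := ()
  t _ := ()
  comp g h _ := g * h
  unit _ := 1
  inv g := g⁻¹
  s_comp := fun _ _ _ => rfl
  t_comp := fun _ _ _ => rfl
  s_unit := fun x => by cases x; rfl
  t_unit := fun x => by cases x; rfl
  s_inv := fun _ => rfl
  t_inv := fun _ => rfl
  comp_assoc := fun g h k _ _ => mul_assoc g h k
  unit_comp := fun g => one_mul g
  comp_unit := fun g => mul_one g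
  inv_comp := fun g => inv_mul_cancel g
  comp_inv := fun g => mul_inv_cancel g

/-- A generalized homomorphism `Γ₀ ←τ Z →σ Λ₀` from `Γ` to `Λ`: commuting left
`Γ`- and right `Λ`-actions on `Z` making `Z` a principal `Λ`-bundle over `Γ₀`. -/
structure GenHom (Γ Λ : Gpd) where
  Z : Type
  τ : Z → Γ.O
  σ : Z → Λ.O
  lact : ∀ (γ : Γ.M) (z : Z), Γ.s γ = τ z → Z
  ract : ∀ (z : Z) (δ : Λ.M), σ z = Λ.t δ → Z
  τ_lact : ∀ γ z h, τ (lact γ z h) = Γ.t γ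
  σ_lact : ∀ γ z h, σ (lact γ z h) = σ z
  τ_ract : ∀ z δ h, τ (ract z δ h) = τ z
  σ_ract : ∀ z δ h, σ (ract z δ h) = Λ.s δ
  lact_unit : ∀ z, lact (Γ.unit (τ z)) z (Γ.s_unit _) = z
  lact_comp : ∀ γ₁ γ₂ z (h₁ : Γ.s γ₁ = Γ.t γ₂) (h₂ : Γ.s γ₂ = τ z),
    lact γ₁ (lact γ₂ z h₂) (h₁.trans (τ_lact γ₂ z h₂).symm)
      = lact (Γ.comp γ₁ γ₂ h₁) z ((Γ.s_comp _ _ _).trans h₂)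
  ract_unit : ∀ z, ract z (Λ.unit (σ z)) (Λ.t_unit _).symm = z
  ract_comp : ∀ z δ₁ δ₂ (h₁ : σ z = Λ.t δ₁) (h₂ : Λ.s δ₁ = Λ.t δ₂),
    ract (ract z δ₁ h₁) δ₂ ((σ_ract z δ₁ h₁).trans h₂)
      = ract z (Λ.comp δ₁ δ₂ h₂) (h₁.trans (Λ.t_comp _ _ _).symm)
  act_comm : ∀ γ z δ (hγ : Γ.s γ = τ z) (hδ : σ z = Λ.t δ),
    ract (lact γ z hγ) δ ((σ_lact γ z hγ).trans hδ)
      = lact γ (ract z δ hδ) (hγ.trans (τ_ract z δ hδ).symm)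
  τ_surj : Function.Surjective τ
  principal : ∀ z z', τ z = τ z' → ∃ (δ : Λ.M) (h : σ z = Λ.t δ),
    ract z δ h = z' ∧ ∀ (δ₂ : Λ.M) (h₂ : σ z = Λ.t δ₂), ract z δ₂ h₂ = z' → δ₂ = δ

/-- The category of generalized homomorphisms from `Γ ⇉ Γ₀` to `G ⇉ ·`; morphisms
are `Γ`-`G`-equivariant maps over `Γ₀`. -/
def GHObj (Γ : Gpd) (G : Type) [Group G] : Type _ := GenHom Γ (groupGpd G)

instance ghCategory (Γ : Gpd) (G : Type) [Group G] : Category (GHObj Γ G) where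
  Hom E₁ E₂ := {f : E₁.Z → E₂.Z //
    (∀ z, E₂.τ (f z) = E₁.τ z) ∧
    (∀ (z : E₁.Z) (g : G) (h : E₁.σ z = (groupGpd G).t g)
        (h' : E₂.σ (f z) = (groupGpd G).t g),
      f (E₁.ract z g h) = E₂.ract (f z) g h') ∧
    (∀ (γ : Γ.M) (z : E₁.Z) (h : Γ.s γ = E₁.τ z) (h' : Γ.s γ = E₂.τ (f z)),
      f (E₁.lact γ z h) = E₂.lact γ (f z) h')}
  id E := ⟨id, fun _ => rfl, fun _ _ _ _ => rfl, fun _ _ _ _ => rfl⟩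
  comp {E₁ E₂ E₃} f g := ⟨g.1 ∘ f.1,
    fun z => (g.2.1 (f.1 z)).trans (f.2.1 z),
    fun z gg h h' => by
      dsimp
      rw [f.2.2.1 z gg h rfl, g.2.2.1 (f.1 z) gg rfl h'],
    fun γ z h h' => by
      dsimp
      rw [f.2.2.2 γ z h (h.trans (f.2.1 z).symm),
        g.2.2.2 γ (f.1 z) (h.trans (f.2.1 z).symm) h']⟩
  id_comp _ := Subtype.ext rfl
  comp_id _ := Subtype.ext rfl
  assoc _ _ _ := Subtype.ext rfl

/-- A Morita equivalence (bibundle) between two groupoids: a generalized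
homomorphism which is biprincipal. -/
def GenHom.IsBiprincipal {Γ Λ : Gpd} (E : GenHom Γ Λ) : Prop :=
  Function.Surjective E.σ ∧
  ∀ z z', E.σ z = E.σ z' → ∃ (γ : Γ.M) (h : Γ.s γ = E.τ z),
    E.lact γ z h = z' ∧ ∀ (γ₂ : Γ.M) (h₂ : Γ.s γ₂ = E.τ z), E.lact γ₂ z h₂ = z' → γ₂ = γ

/-- Morita equivalence of Lie groupoids. -/
def Morita (Γ Λ : Gpd) : Prop := ∃ E : GenHom Γ Λ, E.IsBiprincipal

/-! ### Auxiliary development for the proof -/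

section GpdLemmas

namespace Gpd

variable {Γ : Gpd}

theorem comp_congr {g g' h h' : Γ.M} (hg : g = g') (hh : h = h')
    (hc : Γ.s g = Γ.t h) (hc' : Γ.s g' = Γ.t h') :
    Γ.comp g h hc = Γ.comp g' h' hc' := by subst hg; subst hh; rfl

theorem inv_unit (x : Γ.O) : Γ.inv (Γ.unit x) = Γ.unit x := by
  have hs : Γ.s (Γ.inv (Γ.unit x)) = x := (Γ.s_inv _).trans (Γ.t_unit x)
  calc Γ.inv (Γ.unit x)
      = Γ.comp (Γ.inv (Γ.unit x)) (Γ.unit (Γ.s (Γ.inv (Γ.unit x))))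
          (Γ.t_unit _).symm := (Γ.comp_unit _).symm
    _ = Γ.comp (Γ.inv (Γ.unit x)) (Γ.unit x) (Γ.s_inv _) :=
        comp_congr rfl (congrArg Γ.unit hs) _ _
    _ = Γ.unit (Γ.s (Γ.unit x)) := Γ.inv_comp _
    _ = Γ.unit x := congrArg Γ.unit (Γ.s_unit x)

theorem inv_inv (g : Γ.M) : Γ.inv (Γ.inv g) = g := by
  have hsu : Γ.s (Γ.inv (Γ.inv g)) = Γ.s g := (Γ.s_inv _).trans (Γ.t_inv g)
  calc Γ.inv (Γ.inv g)
      = Γ.comp (Γ.inv (Γ.inv g)) (Γ.unit (Γ.s (Γ.inv (Γ.inv g))))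
          (Γ.t_unit _).symm := (Γ.comp_unit _).symm
    _ = Γ.comp (Γ.inv (Γ.inv g)) (Γ.comp (Γ.inv g) g (Γ.s_inv g))
          ((Γ.s_inv _).trans ((Γ.t_comp _ _ _).symm)) := by
        refine comp_congr rfl ?_ _ _
        rw [Γ.inv_comp g]; exact congrArg Γ.unit hsu
    _ = Γ.comp (Γ.comp (Γ.inv (Γ.inv g)) (Γ.inv g) (Γ.s_inv _)) g
          ((Γ.s_comp _ _ _).trans (Γ.s_inv g)) :=
        (Γ.comp_assoc _ _ _ _ _).symm
    _ = Γ.comp (Γ.unit (Γ.t g)) g (Γ.s_unit _) := by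
        refine comp_congr ?_ rfl _ _
        rw [Γ.inv_comp (Γ.inv g)]; exact congrArg Γ.unit (Γ.s_inv g)
    _ = g := Γ.unit_comp g

theorem inv_eq_of_comp {g k : Γ.M} (hc : Γ.s k = Γ.t g)
    (h : Γ.comp k g hc = Γ.unit (Γ.s g)) : k = Γ.inv g := by
  calc k = Γ.comp k (Γ.unit (Γ.s k)) (Γ.t_unit _).symm := (Γ.comp_unit k).symm
    _ = Γ.comp k (Γ.comp g (Γ.inv g) (Γ.t_inv g).symm)
          (hc.trans (Γ.t_comp _ _ _).symm) := by
        refine comp_congr rfl ?_ _ _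
        rw [Γ.comp_inv g]; exact congrArg Γ.unit hc
    _ = Γ.comp (Γ.comp k g hc) (Γ.inv g)
          ((Γ.s_comp _ _ _).trans (Γ.t_inv g).symm) :=
        (Γ.comp_assoc _ _ _ _ _).symm
    _ = Γ.comp (Γ.unit (Γ.t (Γ.inv g))) (Γ.inv g) (Γ.s_unit _) := by
        refine comp_congr ?_ rfl _ _
        rw [h]; exact congrArg Γ.unit (Γ.t_inv g).symm
    _ = Γ.inv g := Γ.unit_comp _

theorem inv_comp_rev {g h : Γ.M} (hc : Γ.s g = Γ.t h) :
    Γ.inv (Γ.comp g h hc) = Γ.comp (Γ.inv h) (Γ.inv g)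
      ((Γ.s_inv h).trans (hc.symm.trans (Γ.t_inv g).symm)) := by
  symm
  apply inv_eq_of_comp ((Γ.s_comp _ _ _).trans ((Γ.s_inv g).trans
    ((Γ.t_comp g h hc).symm)))
  calc Γ.comp (Γ.comp (Γ.inv h) (Γ.inv g) _) (Γ.comp g h hc)
        ((Γ.s_comp _ _ _).trans ((Γ.s_inv g).trans ((Γ.t_comp g h hc).symm)))
      = Γ.comp (Γ.inv h) (Γ.comp (Γ.inv g) (Γ.comp g h hc)
          ((Γ.s_inv g).trans (Γ.t_comp g h hc).symm))
          (((Γ.s_inv h).trans (hc.symm.trans (Γ.t_inv g).symm)).trans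
            (Γ.t_comp _ _ _).symm) := Γ.comp_assoc _ _ _ _ _
    _ = Γ.comp (Γ.inv h) h (Γ.s_inv h) := by
        refine comp_congr rfl ?_ _ _
        calc Γ.comp (Γ.inv g) (Γ.comp g h hc)
              ((Γ.s_inv g).trans (Γ.t_comp g h hc).symm)
            = Γ.comp (Γ.comp (Γ.inv g) g (Γ.s_inv g)) h
                ((Γ.s_comp _ _ _).trans hc) := (Γ.comp_assoc _ _ _ _ _).symm
          _ = Γ.comp (Γ.unit (Γ.t h)) h (Γ.s_unit _) := by
              refine comp_congr ?_ rfl _ _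
              rw [Γ.inv_comp g]; exact congrArg Γ.unit hc
          _ = h := Γ.unit_comp h
    _ = Γ.unit (Γ.s h) := Γ.inv_comp h
    _ = Γ.unit (Γ.s (Γ.comp g h hc)) := congrArg Γ.unit (Γ.s_comp g h hc).symm

end Gpd

namespace GenHom

variable {Γ Λ : Gpd} (E : GenHom Γ Λ)

theorem ract_congr {z z' : E.Z} {δ δ' : Λ.M} (hz : z = z') (hδ : δ = δ')
    (hc : E.σ z = Λ.t δ) (hc' : E.σ z' = Λ.t δ') :
    E.ract z δ hc = E.ract z' δ' hc' := by subst hz; subst hδ; rfl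

theorem lact_congr {γ γ' : Γ.M} {z z' : E.Z} (hγ : γ = γ') (hz : z = z')
    (hc : Γ.s γ = E.τ z) (hc' : Γ.s γ' = E.τ z') :
    E.lact γ z hc = E.lact γ' z' hc' := by subst hγ; subst hz; rfl

theorem ract_unit' (z : E.Z) (hc : E.σ z = Λ.t (Λ.unit (E.σ z))) :
    E.ract z (Λ.unit (E.σ z)) hc = z := E.ract_unit z

theorem ract_ract_inv (z : E.Z) (δ : Λ.M) (hc : E.σ z = Λ.t δ)
    (hc' : E.σ (E.ract z δ hc) = Λ.t (Λ.inv δ)) :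
    E.ract (E.ract z δ hc) (Λ.inv δ) hc' = z := by
  calc E.ract (E.ract z δ hc) (Λ.inv δ) hc'
      = E.ract z (Λ.comp δ (Λ.inv δ) (Λ.t_inv δ).symm)
          (hc.trans (Λ.t_comp _ _ _).symm) :=
        E.ract_comp z δ (Λ.inv δ) hc (Λ.t_inv δ).symm
    _ = E.ract z (Λ.unit (E.σ z)) (Λ.t_unit _).symm := by
        refine ract_congr E rfl ?_ _ _
        rw [Λ.comp_inv δ]; exact congrArg Λ.unit hc.symm
    _ = z := E.ract_unit z

theorem ract_inv_ract (z : E.Z) (δ : Λ.M) (hc : E.σ z = Λ.t (Λ.inv δ))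
    (hc' : E.σ (E.ract z (Λ.inv δ) hc) = Λ.t δ) :
    E.ract (E.ract z (Λ.inv δ) hc) δ hc' = z := by
  have := E.ract_ract_inv z (Λ.inv δ) hc
    ((E.σ_ract _ _ _).trans ((Λ.s_inv δ).trans (congrArg Λ.t (Gpd.inv_inv δ).symm)))
  calc E.ract (E.ract z (Λ.inv δ) hc) δ hc'
      = E.ract (E.ract z (Λ.inv δ) hc) (Λ.inv (Λ.inv δ)) ((E.σ_ract _ _ _).trans
          ((Λ.s_inv δ).trans (congrArg Λ.t (Gpd.inv_inv δ).symm))) :=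
        ract_congr E rfl (Gpd.inv_inv δ).symm _ _
    _ = z := this

theorem lact_lact_inv (γ : Γ.M) (z : E.Z) (hc : Γ.s γ = E.τ z)
    (hc' : Γ.s (Γ.inv γ) = E.τ (E.lact γ z hc)) :
    E.lact (Γ.inv γ) (E.lact γ z hc) hc' = z := by
  calc E.lact (Γ.inv γ) (E.lact γ z hc) hc'
      = E.lact (Γ.comp (Γ.inv γ) γ (Γ.s_inv γ)) z ((Γ.s_comp _ _ _).trans hc) :=
        E.lact_comp (Γ.inv γ) γ z (Γ.s_inv γ) hc
    _ = E.lact (Γ.unit (E.τ z)) z (Γ.s_unit _) := by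
        refine lact_congr E ?_ rfl _ _
        rw [Γ.inv_comp γ]; exact congrArg Γ.unit hc
    _ = z := E.lact_unit z

theorem lact_inv_lact (γ : Γ.M) (z : E.Z) (hc : Γ.s (Γ.inv γ) = E.τ z)
    (hc' : Γ.s γ = E.τ (E.lact (Γ.inv γ) z hc)) :
    E.lact γ (E.lact (Γ.inv γ) z hc) hc' = z := by
  have := E.lact_lact_inv (Γ.inv γ) z hc
    ((Γ.s_inv (Γ.inv γ)).trans (E.τ_lact _ _ _).symm)
  calc E.lact γ (E.lact (Γ.inv γ) z hc) hc'
      = E.lact (Γ.inv (Γ.inv γ)) (E.lact (Γ.inv γ) z hc)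
          ((Γ.s_inv (Γ.inv γ)).trans (E.τ_lact _ _ _).symm) :=
        lact_congr E (Gpd.inv_inv γ).symm rfl _ _
    _ = z := this

end GenHom

namespace GpdBundle

variable {G : Type} [Group G] {Γ : Gpd} {P : Type} (B : GpdBundle G Γ P)

theorem gact_congr {γ γ' : Γ.M} {p p' : P} (hγ : γ = γ') (hp : p = p')
    (hc : Γ.s γ = B.proj p) (hc' : Γ.s γ' = B.proj p') :
    B.gact γ p hc = B.gact γ' p' hc' := by subst hγ; subst hp; rfl

theorem gact_inv_gact (γ : Γ.M) (p : P) (hc : Γ.s γ = B.proj p)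
    (hc' : Γ.s (Γ.inv γ) = B.proj (B.gact γ p hc)) :
    B.gact (Γ.inv γ) (B.gact γ p hc) hc' = p := by
  calc B.gact (Γ.inv γ) (B.gact γ p hc) hc'
      = B.gact (Γ.comp (Γ.inv γ) γ (Γ.s_inv γ)) p ((Γ.s_comp _ _ _).trans hc) :=
        B.gact_comp (Γ.inv γ) γ p (Γ.s_inv γ) hc
    _ = B.gact (Γ.unit (B.proj p)) p (Γ.s_unit _) := by
        refine gact_congr B ?_ rfl _ _
        rw [Γ.inv_comp γ]; exact congrArg Γ.unit hc
    _ = p := B.gact_unit p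

theorem gact_gact_inv (γ : Γ.M) (p : P) (hc : Γ.s (Γ.inv γ) = B.proj p)
    (hc' : Γ.s γ = B.proj (B.gact (Γ.inv γ) p hc)) :
    B.gact γ (B.gact (Γ.inv γ) p hc) hc' = p := by
  have := B.gact_inv_gact (Γ.inv γ) p hc
    ((Γ.s_inv (Γ.inv γ)).trans (B.gact_proj _ _ _).symm)
  calc B.gact γ (B.gact (Γ.inv γ) p hc) hc'
      = B.gact (Γ.inv (Γ.inv γ)) (B.gact (Γ.inv γ) p hc)
          ((Γ.s_inv (Γ.inv γ)).trans (B.gact_proj _ _ _).symm) :=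
        gact_congr B (Gpd.inv_inv γ).symm rfl _ _
    _ = p := this

theorem gact_injective (γ : Γ.M) {p q : P} (hp : Γ.s γ = B.proj p)
    (hq : Γ.s γ = B.proj q) (h : B.gact γ p hp = B.gact γ q hq) : p = q := by
  calc p = B.gact (Γ.inv γ) (B.gact γ p hp)
        ((Γ.s_inv γ).trans (B.gact_proj _ _ _).symm) :=
        (B.gact_inv_gact γ p hp _).symm
    _ = B.gact (Γ.inv γ) (B.gact γ q hq)
        ((Γ.s_inv γ).trans (B.gact_proj _ _ _).symm) := B.gact_congr rfl h _ _
    _ = q := B.gact_inv_gact γ q hq _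

end GpdBundle

end GpdLemmas

section Part1

variable (G : Type) [Group G] (Γ : Gpd)

/-- From a principal bundle over the groupoid to a generalized homomorphism. -/
def bdlToGHobj (A : BdlObj G Γ) : GHObj Γ G where
  Z := A.P
  τ := A.B.proj
  σ := fun _ => ()
  lact := A.B.gact
  ract := fun z g _ => A.B.act z g
  τ_lact := A.B.gact_proj
  σ_lact := fun _ _ _ => rfl
  τ_ract := fun z δ _ => A.B.proj_act z δ
  σ_ract := fun _ _ _ => rfl
  lact_unit := A.B.gact_unit
  lact_comp := A.B.gact_comp
  ract_unit := fun z => A.B.act_one z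
  ract_comp := fun z δ₁ δ₂ _ _ => A.B.act_mul z δ₁ δ₂
  act_comm := fun γ z δ hγ _ => (A.B.gact_act γ z δ hγ).symm
  τ_surj := A.hB.1
  principal := fun z z' h => by
    obtain ⟨g, hg, hu⟩ := A.hB.2 z z' h
    exact ⟨g, rfl, hg, fun δ₂ _ hr => hu δ₂ hr⟩

/-- From a generalized homomorphism to a principal bundle over the groupoid. -/
def ghToBdlObj (E : GHObj Γ G) : BdlObj G Γ where
  P := E.Z
  B :=
    { proj := E.τ
      act := fun p g => E.ract p g rfl
      act_one := fun p => E.ract_unit p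
      act_mul := fun p g h => E.ract_comp p g h rfl rfl
      proj_act := fun p g => E.τ_ract p g rfl
      gact := E.lact
      gact_proj := E.τ_lact
      gact_unit := E.lact_unit
      gact_comp := E.lact_comp
      gact_act := fun γ p g h => (E.act_comm γ p g h rfl).symm }
  hB := ⟨E.τ_surj, fun p q hpq => by
    obtain ⟨δ, h, hr, hu⟩ := E.principal p q hpq
    exact ⟨δ, hr, fun y hy => hu y rfl hy⟩⟩

/-- The functor from bundles to generalized homomorphisms. -/
def bdlToGH : BdlObj G Γ ⥤ GHObj Γ G where
  obj := bdlToGHobj G Γ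
  map {A₁ A₂} f := ⟨f.1, f.2.1, fun z g _ _ => f.2.2.1 z g, f.2.2.2⟩
  map_id _ := Subtype.ext rfl
  map_comp _ _ := Subtype.ext rfl

/-- The functor from generalized homomorphisms to bundles. -/
def ghToBdl : GHObj Γ G ⥤ BdlObj G Γ where
  obj := ghToBdlObj G Γ
  map {E₁ E₂} f := ⟨f.1, f.2.1, fun p g => f.2.2.1 p g rfl rfl, f.2.2.2⟩
  map_id _ := Subtype.ext rfl
  map_comp _ _ := Subtype.ext rfl

/-- The equivalence between principal `G`-bundles over `Γ` and generalized
homomorphisms `Γ → G`. -/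
def bdlEquivGH : BdlObj G Γ ≌ GHObj Γ G :=
  CategoryTheory.Equivalence.mk (bdlToGH G Γ) (ghToBdl G Γ)
    (CategoryTheory.NatIso.ofComponents
      (fun A =>
        { hom := ⟨id, fun _ => rfl, fun _ _ => rfl, fun _ _ _ _ => rfl⟩
          inv := ⟨id, fun _ => rfl, fun _ _ => rfl, fun _ _ _ _ => rfl⟩
          hom_inv_id := Subtype.ext rfl
          inv_hom_id := Subtype.ext rfl })
      (fun _ => Subtype.ext rfl))
    (CategoryTheory.NatIso.ofComponents
      (fun E =>
        { hom := ⟨id, fun _ => rfl, fun _ _ _ _ => rfl, fun _ _ _ _ => rfl⟩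
          inv := ⟨id, fun _ => rfl, fun _ _ _ _ => rfl, fun _ _ _ _ => rfl⟩
          hom_inv_id := Subtype.ext rfl
          inv_hom_id := Subtype.ext rfl })
      (fun _ => Subtype.ext rfl))

end Part1

section Induced

attribute [local instance] Classical.propDecidable

variable {G : Type} [Group G] {Γ Γ' : Gpd}

/-- Carrier of the fibre product `Z ×_{Γ₀} P`. -/
def indS (E : GenHom Γ' Γ) {P : Type} (B : GpdBundle G Γ P) : Type :=
  {x : E.Z × P // E.σ x.1 = B.proj x.2}

/-- The relation identifying `(z·δ, p)` with `(z, δ·p)`. -/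
def indRel (E : GenHom Γ' Γ) {P : Type} (B : GpdBundle G Γ P) :
    indS E B → indS E B → Prop := fun x y =>
  ∃ (δ : Γ.M) (h1 : E.σ y.1.1 = Γ.t δ) (h2 : Γ.s δ = B.proj x.1.2),
    x.1.1 = E.ract y.1.1 δ h1 ∧ y.1.2 = B.gact δ x.1.2 h2

theorem indRel_refl (E : GenHom Γ' Γ) {P : Type} (B : GpdBundle G Γ P)
    (x : indS E B) : indRel E B x x := by
  refine ⟨Γ.unit (E.σ x.1.1), (Γ.t_unit _).symm, (Γ.s_unit _).trans x.2,
    (E.ract_unit x.1.1).symm, ?_⟩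
  exact ((B.gact_congr (congrArg Γ.unit x.2) rfl _ _).trans (B.gact_unit x.1.2)).symm

theorem indRel_symm (E : GenHom Γ' Γ) {P : Type} (B : GpdBundle G Γ P)
    {x y : indS E B} (h : indRel E B x y) : indRel E B y x := by
  obtain ⟨δ, h1, h2, hx, hy⟩ := h
  have hσx : E.σ x.1.1 = Γ.t (Γ.inv δ) :=
    (congrArg E.σ hx).trans ((E.σ_ract _ _ _).trans (Γ.t_inv δ).symm)
  have hs' : Γ.s (Γ.inv δ) = B.proj y.1.2 :=
    (Γ.s_inv δ).trans (h1.symm.trans y.2)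
  refine ⟨Γ.inv δ, hσx, hs', ?_, ?_⟩
  · calc y.1.1
        = E.ract (E.ract y.1.1 δ h1) (Γ.inv δ)
          ((E.σ_ract y.1.1 δ h1).trans (Γ.t_inv δ).symm) :=
          (E.ract_ract_inv y.1.1 δ h1 _).symm
      _ = E.ract x.1.1 (Γ.inv δ) hσx := E.ract_congr hx.symm rfl _ _
  · calc x.1.2
        = B.gact (Γ.inv δ) (B.gact δ x.1.2 h2)
            ((Γ.s_inv δ).trans (B.gact_proj _ _ _).symm) :=
          (B.gact_inv_gact δ x.1.2 h2 _).symm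
      _ = B.gact (Γ.inv δ) y.1.2 hs' := B.gact_congr rfl hy.symm _ _

theorem indRel_trans (E : GenHom Γ' Γ) {P : Type} (B : GpdBundle G Γ P)
    {x y z : indS E B} (hxy : indRel E B x y) (hyz : indRel E B y z) :
    indRel E B x z := by
  obtain ⟨δ₁, h11, h12, hx1, hy1⟩ := hxy
  obtain ⟨δ₂, h21, h22, hx2, hy2⟩ := hyz
  have hcomp : Γ.s δ₂ = Γ.t δ₁ := h22.trans (y.2.symm.trans h11)
  refine ⟨Γ.comp δ₂ δ₁ hcomp, h21.trans (Γ.t_comp _ _ _).symm,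
    (Γ.s_comp _ _ _).trans h12, ?_, ?_⟩
  · calc x.1.1 = E.ract y.1.1 δ₁ h11 := hx1
      _ = E.ract (E.ract z.1.1 δ₂ h21) δ₁
          ((E.σ_ract _ _ _).trans hcomp) := E.ract_congr hx2 rfl _ _
      _ = E.ract z.1.1 (Γ.comp δ₂ δ₁ hcomp) (h21.trans (Γ.t_comp _ _ _).symm) :=
          E.ract_comp z.1.1 δ₂ δ₁ h21 hcomp
  · calc z.1.2 = B.gact δ₂ y.1.2 h22 := hy2
      _ = B.gact δ₂ (B.gact δ₁ x.1.2 h12)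
          (h22.trans (y.2.symm.trans ((B.gact_proj δ₁ x.1.2 h12).symm ▸
            (h11.symm ▸ rfl)))) := B.gact_congr rfl hy1 _ _
      _ = B.gact (Γ.comp δ₂ δ₁ hcomp) x.1.2 ((Γ.s_comp _ _ _).trans h12) :=
          B.gact_comp δ₂ δ₁ x.1.2 hcomp h12

/-- Setoid on the fibre product. -/
def indSetoid (E : GenHom Γ' Γ) {P : Type} (B : GpdBundle G Γ P) :
    Setoid (indS E B) :=
  ⟨indRel E B, ⟨indRel_refl E B, indRel_symm E B, indRel_trans E B⟩⟩

/-- The induced space `(Z ×_{Γ₀} P)/Γ`. -/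
def IndP (E : GenHom Γ' Γ) {P : Type} (B : GpdBundle G Γ P) : Type :=
  Quotient (indSetoid E B)

def indMk (E : GenHom Γ' Γ) {P : Type} (B : GpdBundle G Γ P) (x : indS E B) :
    IndP E B := Quotient.mk (indSetoid E B) x

theorem indMk_eq (E : GenHom Γ' Γ) {P : Type} (B : GpdBundle G Γ P)
    {x y : indS E B} (h : indRel E B x y) : indMk E B x = indMk E B y :=
  Quotient.sound h

def indProj (E : GenHom Γ' Γ) {P : Type} (B : GpdBundle G Γ P) :
    IndP E B → Γ'.O :=
  Quotient.lift (fun x => E.τ x.1.1) (by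
    rintro x y ⟨δ, h1, h2, hx, hy⟩
    exact (congrArg E.τ hx).trans (E.τ_ract y.1.1 δ h1))

def indAct (E : GenHom Γ' Γ) {P : Type} (B : GpdBundle G Γ P) :
    IndP E B → G → IndP E B := fun q g =>
  Quotient.lift (fun x => indMk E B
      ⟨(x.1.1, B.act x.1.2 g), x.2.trans (B.proj_act x.1.2 g).symm⟩)
    (by
      rintro x y ⟨δ, h1, h2, hx, hy⟩
      refine indMk_eq E B ⟨δ, h1, h2.trans (B.proj_act x.1.2 g).symm, hx, ?_⟩
      exact (congrArg (fun p => B.act p g) hy).trans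
        (B.gact_act δ x.1.2 g h2).symm) q

def indGactAux (E : GenHom Γ' Γ) {P : Type} (B : GpdBundle G Γ P)
    (γ : Γ'.M) : indS E B → IndP E B := fun x =>
  if h : Γ'.s γ = E.τ x.1.1 then
    indMk E B ⟨(E.lact γ x.1.1 h, x.1.2), (E.σ_lact γ x.1.1 h).trans x.2⟩
  else indMk E B x

theorem indGactAux_resp (E : GenHom Γ' Γ) {P : Type} (B : GpdBundle G Γ P)
    (γ : Γ'.M) {x y : indS E B} (hxy : indRel E B x y) :
    indGactAux E B γ x = indGactAux E B γ y := by
  obtain ⟨δ, h1, h2, hx, hy⟩ := hxy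
  have hτ : E.τ x.1.1 = E.τ y.1.1 := (congrArg E.τ hx).trans (E.τ_ract y.1.1 δ h1)
  unfold indGactAux
  by_cases h : Γ'.s γ = E.τ x.1.1
  · rw [dif_pos h, dif_pos (h.trans hτ)]
    refine indMk_eq E B ⟨δ, (E.σ_lact _ _ _).trans h1, h2, ?_, hy⟩
    calc E.lact γ x.1.1 h
        = E.lact γ (E.ract y.1.1 δ h1) (h.trans hτ |>.trans
            (E.τ_ract y.1.1 δ h1).symm) := E.lact_congr rfl hx _ _
      _ = E.ract (E.lact γ y.1.1 (h.trans hτ)) δ ((E.σ_lact _ _ _).trans h1) :=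
          (E.act_comm γ y.1.1 δ (h.trans hτ) h1).symm
  · rw [dif_neg h, dif_neg (fun hh => h (hh.trans hτ.symm))]
    exact indMk_eq E B ⟨δ, h1, h2, hx, hy⟩

def indGact (E : GenHom Γ' Γ) {P : Type} (B : GpdBundle G Γ P)
    (γ : Γ'.M) (q : IndP E B) : IndP E B :=
  Quotient.lift (indGactAux E B γ) (fun _ _ h => indGactAux_resp E B γ h) q

theorem indGact_mk (E : GenHom Γ' Γ) {P : Type} (B : GpdBundle G Γ P)
    (γ : Γ'.M) (x : indS E B) (h : Γ'.s γ = E.τ x.1.1) :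
    indGact E B γ (indMk E B x) =
      indMk E B ⟨(E.lact γ x.1.1 h, x.1.2), (E.σ_lact γ x.1.1 h).trans x.2⟩ := by
  show indGactAux E B γ x = _
  unfold indGactAux
  rw [dif_pos h]

/-- The induced principal bundle structure over `Γ'`. -/
def indBundle (E : GenHom Γ' Γ) {P : Type} (B : GpdBundle G Γ P) :
    GpdBundle G Γ' (IndP E B) where
  proj := indProj E B
  act := indAct E B
  act_one := by
    refine Quotient.ind ?_
    intro x
    exact congrArg (indMk E B) (Subtype.ext (Prod.ext rfl (B.act_one x.1.2)))
  act_mul := by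
    refine Quotient.ind ?_
    intro x g h
    exact congrArg (indMk E B) (Subtype.ext (Prod.ext rfl (B.act_mul x.1.2 g h)))
  proj_act := by
    refine Quotient.ind ?_
    intro x g
    rfl
  gact := fun γ q _ => indGact E B γ q
  gact_proj := by
    refine fun γ => Quotient.ind ?_
    intro x h
    show indProj E B (indGact E B γ (indMk E B x)) = Γ'.t γ
    rw [indGact_mk E B γ x h]
    exact E.τ_lact γ x.1.1 h
  gact_unit := by
    refine Quotient.ind ?_
    intro x
    show indGact E B (Γ'.unit (indProj E B (indMk E B x))) (indMk E B x) =
      indMk E B x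
    rw [indGact_mk E B (Γ'.unit (indProj E B (indMk E B x))) x (Γ'.s_unit _)]
    exact congrArg (indMk E B) (Subtype.ext (Prod.ext (E.lact_unit x.1.1) rfl))
  gact_comp := by
    refine fun γ₁ γ₂ => Quotient.ind ?_
    intro x h₁ h₂
    show indGact E B γ₁ (indGact E B γ₂ (indMk E B x)) =
      indGact E B (Γ'.comp γ₁ γ₂ h₁) (indMk E B x)
    rw [indGact_mk E B γ₂ x h₂,
      indGact_mk E B γ₁ ⟨(E.lact γ₂ x.1.1 h₂, x.1.2), (E.σ_lact γ₂ x.1.1 h₂).trans x.2⟩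
        (h₁.trans (E.τ_lact γ₂ x.1.1 h₂).symm),
      indGact_mk E B (Γ'.comp γ₁ γ₂ h₁) x ((Γ'.s_comp γ₁ γ₂ h₁).trans h₂)]
    exact congrArg (indMk E B)
      (Subtype.ext (Prod.ext (E.lact_comp γ₁ γ₂ x.1.1 h₁ h₂) rfl))
  gact_act := by
    refine fun γ => Quotient.ind ?_
    intro x g h
    show indGact E B γ (indAct E B (indMk E B x) g) =
      indAct E B (indGact E B γ (indMk E B x)) g
    rw [show indAct E B (indMk E B x) g = indMk E B
        ⟨(x.1.1, B.act x.1.2 g), x.2.trans (B.proj_act x.1.2 g).symm⟩ from rfl,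
      indGact_mk E B γ ⟨(x.1.1, B.act x.1.2 g),
        x.2.trans (B.proj_act x.1.2 g).symm⟩ h, indGact_mk E B γ x h]
    rfl

/-- The induced bundle is principal. -/
theorem indBundle_principal (E : GenHom Γ' Γ) {P : Type} (B : GpdBundle G Γ P)
    (hB : B.toPrinBundle.IsPrincipal) :
    (indBundle E B).toPrinBundle.IsPrincipal := by
  constructor
  · intro o
    obtain ⟨z, hz⟩ := E.τ_surj o
    obtain ⟨p, hp⟩ := hB.1 (E.σ z)
    exact ⟨indMk E B ⟨(z, p), hp.symm⟩, hz⟩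
  · refine Quotient.ind ?_
    intro x
    refine Quotient.ind ?_
    intro y hττ
    -- hττ : E.τ x.1.1 = E.τ y.1.1
    obtain ⟨δ, hδ, hr, hu⟩ := E.principal x.1.1 y.1.1 hττ
    have hsδ : Γ.s δ = B.proj y.1.2 := by
      have : E.σ y.1.1 = Γ.s δ := (congrArg E.σ hr).symm.trans (E.σ_ract _ _ _)
      exact this.symm.trans y.2
    have hproj : B.proj x.1.2 = B.proj (B.gact δ y.1.2 hsδ) := by
      rw [B.gact_proj δ y.1.2 hsδ]
      exact x.2.symm.trans hδ
    obtain ⟨g, hg, hgu⟩ := hB.2 x.1.2 (B.gact δ y.1.2 hsδ) hproj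
    refine ⟨g, ?_, ?_⟩
    · show indAct E B (indMk E B x) g = indMk E B y
      exact (indMk_eq E B (⟨δ, hδ, hsδ, hr.symm, hg⟩ : indRel E B y
        ⟨(x.1.1, B.act x.1.2 g), x.2.trans (B.proj_act x.1.2 g).symm⟩)).symm
    · intro g' hg'
      have hg2 : indMk E B ⟨(x.1.1, B.act x.1.2 g'),
          x.2.trans (B.proj_act x.1.2 g').symm⟩ = indMk E B y := hg'
      obtain ⟨δ₂, h1, h2, hx2, hy2⟩ := Quotient.exact (s := indSetoid E B) hg2
      -- hx2 : x.1.1 = E.ract y.1.1 δ₂ h1,  hy2 : y.1.2 = B.gact δ₂ (B.act x.1.2 g') h2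
      obtain ⟨δ₀, hδ₀, hr₀, hu₀⟩ := E.principal y.1.1 x.1.1 hττ.symm
      have hδ₂ : δ₂ = δ₀ := hu₀ δ₂ h1 hx2.symm
      have hinv : Γ.inv δ = δ₀ := by
        refine hu₀ (Γ.inv δ) ((congrArg E.σ hr.symm).trans
          ((E.σ_ract _ _ _).trans (Γ.t_inv δ).symm)) ?_
        calc E.ract y.1.1 (Γ.inv δ) _
            = E.ract (E.ract x.1.1 δ hδ) (Γ.inv δ) ((E.σ_ract _ _ _).trans
                (Γ.t_inv δ).symm) := E.ract_congr hr.symm rfl _ _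
          _ = x.1.1 := E.ract_ract_inv x.1.1 δ hδ _
      have hδ₂' : δ₂ = Γ.inv δ := hδ₂.trans hinv.symm
      -- from hg : B.act x.1.2 g = B.gact δ y.1.2
      have hpr : Γ.s δ₂ = B.proj (B.act x.1.2 g) :=
        h2.trans ((B.proj_act x.1.2 g').trans (B.proj_act x.1.2 g).symm)
      have key : B.gact δ₂ (B.act x.1.2 g') h2 = B.gact δ₂ (B.act x.1.2 g) hpr := by
        rw [← hy2]
        have : B.gact δ₂ (B.act x.1.2 g) hpr = y.1.2 := by
          calc B.gact δ₂ (B.act x.1.2 g) hpr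
              = B.gact (Γ.inv δ) (B.gact δ y.1.2 hsδ)
                  ((Γ.s_inv δ).trans (B.gact_proj _ _ _).symm) :=
                B.gact_congr hδ₂' hg _ _
            _ = y.1.2 := B.gact_inv_gact δ y.1.2 hsδ _
        exact this.symm
      have act_eq : B.act x.1.2 g' = B.act x.1.2 g :=
        B.gact_injective δ₂ h2 _ key
      obtain ⟨g₀, hg₀, hgu₀⟩ := hB.2 x.1.2 (B.act x.1.2 g)
        ((B.proj_act x.1.2 g).symm)
      exact (hgu₀ g' (act_eq)).trans (hgu₀ g rfl).symm

/-- The induced bundle as an object of the bundle category. -/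
def indObj (E : GenHom Γ' Γ) (G : Type) [Group G] (A : BdlObj G Γ) :
    BdlObj G Γ' :=
  ⟨IndP E A.B, indBundle E A.B, indBundle_principal E A.B A.hB⟩

/-- The induced map on morphisms. -/
def indMapFun (E : GenHom Γ' Γ) {G : Type} [Group G] {A₁ A₂ : BdlObj G Γ}
    (f : A₁ ⟶ A₂) : IndP E A₁.B → IndP E A₂.B :=
  Quotient.lift (fun x => indMk E A₂.B
      ⟨(x.1.1, f.1 x.1.2), x.2.trans (f.2.1 x.1.2).symm⟩)
    (by
      rintro x y ⟨δ, h1, h2, hx, hy⟩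
      refine indMk_eq E A₂.B ⟨δ, h1, h2.trans (f.2.1 x.1.2).symm, hx, ?_⟩
      calc f.1 y.1.2 = f.1 (A₁.B.gact δ x.1.2 h2) := congrArg f.1 hy
        _ = A₂.B.gact δ (f.1 x.1.2) (h2.trans (f.2.1 x.1.2).symm) :=
          f.2.2.2 δ x.1.2 h2 _)

/-- The induced bundle functor along a generalized homomorphism. -/
def indFun (E : GenHom Γ' Γ) (G : Type) [Group G] :
    BdlObj G Γ ⥤ BdlObj G Γ' where
  obj := indObj E G
  map {A₁ A₂} f := by
    refine ⟨indMapFun E f, ?_, ?_, ?_⟩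
    · exact Quotient.ind (fun x => rfl)
    · refine Quotient.ind ?_
      intro x g
      show indMapFun E f (indAct E A₁.B (indMk E A₁.B x) g) = _
      exact congrArg (indMk E A₂.B) (Subtype.ext (Prod.ext rfl (f.2.2.1 x.1.2 g)))
    · refine fun γ => Quotient.ind ?_
      intro x h h'
      show indMapFun E f (indGact E A₁.B γ (indMk E A₁.B x)) =
        indGact E A₂.B γ (indMapFun E f (indMk E A₁.B x))
      rw [indGact_mk E A₁.B γ x h,
        show indMapFun E f (indMk E A₁.B x) = indMk E A₂.B
          ⟨(x.1.1, f.1 x.1.2), x.2.trans (f.2.1 x.1.2).symm⟩ from rfl,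
        indGact_mk E A₂.B γ ⟨(x.1.1, f.1 x.1.2),
          x.2.trans (f.2.1 x.1.2).symm⟩ h]
      rfl
  map_id A := Subtype.ext (funext (Quotient.ind (fun x => rfl)))
  map_comp f g := Subtype.ext (funext (Quotient.ind (fun x => rfl)))

/-- The flipped (inverse) bibundle of a biprincipal generalized homomorphism. -/
def GenHom.flip (E : GenHom Γ' Γ) (hE : E.IsBiprincipal) : GenHom Γ Γ' where
  Z := E.Z
  τ := E.σ
  σ := E.τ
  lact := fun δ z h => E.ract z (Γ.inv δ) (h.symm.trans (Γ.t_inv δ).symm)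
  ract := fun z γ h => E.lact (Γ'.inv γ) z ((Γ'.s_inv γ).trans h.symm)
  τ_lact := fun δ z h => (E.σ_ract _ _ _).trans (Γ.s_inv δ)
  σ_lact := fun δ z h => E.τ_ract _ _ _
  τ_ract := fun z γ h => E.σ_lact _ _ _
  σ_ract := fun z γ h => (E.τ_lact _ _ _).trans (Γ'.t_inv γ)
  lact_unit := fun z =>
    (E.ract_congr rfl (Gpd.inv_unit (E.σ z)) _
      (Γ.t_unit (E.σ z)).symm).trans (E.ract_unit z)
  lact_comp := fun γ₁ γ₂ z h₁ h₂ => by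
    have c : Γ.s (Γ.inv γ₂) = Γ.t (Γ.inv γ₁) :=
      (Γ.s_inv γ₂).trans (h₁.symm.trans (Γ.t_inv γ₁).symm)
    calc E.ract (E.ract z (Γ.inv γ₂) _) (Γ.inv γ₁) _
        = E.ract z (Γ.comp (Γ.inv γ₂) (Γ.inv γ₁) c) _ :=
          E.ract_comp z (Γ.inv γ₂) (Γ.inv γ₁) _ c
      _ = E.ract z (Γ.inv (Γ.comp γ₁ γ₂ h₁)) _ :=
          E.ract_congr rfl (Gpd.inv_comp_rev h₁).symm _ _
  ract_unit := fun z =>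
    (E.lact_congr (Gpd.inv_unit (E.τ z)) rfl _ ((Γ'.s_unit _).trans
      rfl)).trans (E.lact_unit z)
  ract_comp := fun z γ₁ γ₂ h₁ h₂ => by
    have c : Γ'.s (Γ'.inv γ₂) = Γ'.t (Γ'.inv γ₁) :=
      (Γ'.s_inv γ₂).trans (h₂.symm.trans (Γ'.t_inv γ₁).symm)
    calc E.lact (Γ'.inv γ₂) (E.lact (Γ'.inv γ₁) z _) _
        = E.lact (Γ'.comp (Γ'.inv γ₂) (Γ'.inv γ₁) c) z _ :=
          E.lact_comp (Γ'.inv γ₂) (Γ'.inv γ₁) z c _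
      _ = E.lact (Γ'.inv (Γ'.comp γ₁ γ₂ h₂)) z _ :=
          E.lact_congr (Gpd.inv_comp_rev h₂).symm rfl _ _
  act_comm := fun δ z γ hδ hγ =>
    (E.act_comm (Γ'.inv γ) z (Γ.inv δ) ((Γ'.s_inv γ).trans hγ.symm)
      (hδ.symm.trans (Γ.t_inv δ).symm)).symm
  τ_surj := hE.1
  principal := fun z z' h => by
    obtain ⟨γ, hγ, hl, hu⟩ := hE.2 z z' h
    refine ⟨Γ'.inv γ, hγ.symm.trans (Γ'.t_inv γ).symm, ?_, ?_⟩
    · exact (E.lact_congr (Gpd.inv_inv γ) rfl _ hγ).trans hl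
    · intro γ₂ h₂ hr
      have : Γ'.inv γ₂ = γ := hu (Γ'.inv γ₂) ((Γ'.s_inv γ₂).trans h₂.symm) hr
      calc γ₂ = Γ'.inv (Γ'.inv γ₂) := (Gpd.inv_inv γ₂).symm
        _ = Γ'.inv γ := congrArg Γ'.inv this

/-- The flip of a biprincipal bibundle is biprincipal. -/
theorem GenHom.flip_biprincipal (E : GenHom Γ' Γ) (hE : E.IsBiprincipal) :
    (E.flip hE).IsBiprincipal := by
  constructor
  · exact E.τ_surj
  · intro z z' h
    -- h : E.τ z = E.τ z'
    obtain ⟨δ, hδ, hr, hu⟩ := E.principal z z' h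
    refine ⟨Γ.inv δ, (Γ.s_inv δ).trans hδ.symm, ?_, ?_⟩
    · show E.ract z (Γ.inv (Γ.inv δ)) _ = z'
      exact (E.ract_congr rfl (Gpd.inv_inv δ) _ hδ).trans hr
    · intro γ₂ h₂ hr₂
      have : Γ.inv γ₂ = δ := hu (Γ.inv γ₂)
        (h₂.symm.trans (Γ.t_inv γ₂).symm) hr₂
      calc γ₂ = Γ.inv (Γ.inv γ₂) := (Gpd.inv_inv γ₂).symm
        _ = Γ.inv δ := congrArg Γ.inv this

/-- Every morphism of principal bundles over a groupoid is an isomorphism. -/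
theorem bdl_isIso {G : Type} [Group G] {Γ : Gpd} {A₁ A₂ : BdlObj G Γ}
    (f : A₁ ⟶ A₂) : CategoryTheory.IsIso f := by
  have hinj : Function.Injective f.1 := by
    intro a b hab
    have hproj : A₁.B.proj a = A₁.B.proj b :=
      (f.2.1 a).symm.trans ((congrArg A₂.B.proj hab).trans (f.2.1 b))
    obtain ⟨g₀, hg₀, hu₀⟩ := A₁.hB.2 a b hproj
    have h1 : A₂.B.act (f.1 a) g₀ = A₂.B.act (f.1 a) 1 := by
      rw [A₂.B.act_one]
      exact (f.2.2.1 a g₀).symm.trans ((congrArg f.1 hg₀).trans hab.symm)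
    obtain ⟨g₁, _, hu₁⟩ := A₂.hB.2 (f.1 a) (A₂.B.act (f.1 a) 1)
      (A₂.B.proj_act (f.1 a) 1).symm
    have : g₀ = (1 : G) := (hu₁ g₀ h1).trans (hu₁ 1 rfl).symm
    rw [this] at hg₀
    exact ((A₁.B.act_one a).symm.trans hg₀).symm ▸ rfl
  have hsurj : Function.Surjective f.1 := by
    intro q
    obtain ⟨p₀, hp₀⟩ := A₁.hB.1 (A₂.B.proj q)
    obtain ⟨g, hg, _⟩ := A₂.hB.2 (f.1 p₀) q ((f.2.1 p₀).trans hp₀)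
    exact ⟨A₁.B.act p₀ g, (f.2.2.1 p₀ g).trans hg⟩
  let e := Equiv.ofBijective f.1 ⟨hinj, hsurj⟩
  have he : ∀ q, f.1 (e.symm q) = q := fun q => e.apply_symm_apply q
  refine ⟨⟨e.symm, ?_, ?_, ?_⟩, ?_, ?_⟩
  · intro q
    exact (f.2.1 (e.symm q)).symm.trans (congrArg A₂.B.proj (he q))
  · intro q g
    apply hinj
    rw [f.2.2.1, he, he]
  · intro γ q h h'
    apply hinj
    rw [he, f.2.2.2 γ (e.symm q) h' (h'.trans (f.2.1 (e.symm q)).symm)]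
    exact A₂.B.gact_congr rfl (he q).symm h _
  · exact Subtype.ext (funext fun p => e.symm_apply_apply p)
  · exact Subtype.ext (funext fun q => e.apply_symm_apply q)

section Counit

variable {G : Type} [Group G] {Γ Γ' : Gpd}

/-- Division in a principal bibundle: the unique arrow carrying `w` to `z`. -/
def Ediv (E : GenHom Γ' Γ) (w z : E.Z) (h : E.τ w = E.τ z) : Γ.M :=
  (E.principal w z h).choose

theorem Ediv_spec₁ (E : GenHom Γ' Γ) (w z : E.Z) (h : E.τ w = E.τ z) :
    E.σ w = Γ.t (Ediv E w z h) :=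
  (E.principal w z h).choose_spec.choose

theorem Ediv_spec₂ (E : GenHom Γ' Γ) (w z : E.Z) (h : E.τ w = E.τ z) :
    E.ract w (Ediv E w z h) (Ediv_spec₁ E w z h) = z :=
  (E.principal w z h).choose_spec.choose_spec.1

theorem Ediv_uniq (E : GenHom Γ' Γ) (w z : E.Z) (h : E.τ w = E.τ z)
    (δ : Γ.M) (h₂ : E.σ w = Γ.t δ) (hr : E.ract w δ h₂ = z) :
    δ = Ediv E w z h :=
  (E.principal w z h).choose_spec.choose_spec.2 δ h₂ hr

theorem Ediv_sdiv (E : GenHom Γ' Γ) (w z : E.Z) (h : E.τ w = E.τ z) :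
    Γ.s (Ediv E w z h) = E.σ z :=
  (E.σ_ract w _ _).symm.trans (congrArg E.σ (Ediv_spec₂ E w z h))

/-- The counit on representatives: `(w, [z, p]) ↦ (w/z)·p` (as an option). -/
def mAux (E : GenHom Γ' Γ) {P : Type} (B : GpdBundle G Γ P)
    (w : E.Z) : indS E B → Option P := fun x =>
  if h : E.τ w = E.τ x.1.1 then
    some (B.gact (Ediv E w x.1.1 h) x.1.2 ((Ediv_sdiv E w x.1.1 h).trans x.2))
  else none

theorem optget_eq {α : Type} {o : Option α} {v : α} (h : o = some v)
    (hs : o.isSome) : o.get hs = v := by subst h; rfl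

theorem mAux_resp (E : GenHom Γ' Γ) {P : Type} (B : GpdBundle G Γ P)
    (w : E.Z) {x y : indS E B} (hxy : indRel E B x y) :
    mAux E B w x = mAux E B w y := by
  obtain ⟨δ, h1, h2, hx, hy⟩ := hxy
  have hτ : E.τ x.1.1 = E.τ y.1.1 := (congrArg E.τ hx).trans (E.τ_ract y.1.1 δ h1)
  unfold mAux
  by_cases h : E.τ w = E.τ x.1.1
  · rw [dif_pos h, dif_pos (h.trans hτ)]
    refine congrArg some ?_
    have hcomp : Γ.s (Ediv E w y.1.1 (h.trans hτ)) = Γ.t δ :=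
      (Ediv_sdiv E w y.1.1 (h.trans hτ)).trans h1
    have hdiv : Γ.comp (Ediv E w y.1.1 (h.trans hτ)) δ hcomp =
        Ediv E w x.1.1 h := by
      refine Ediv_uniq E w x.1.1 h _
        ((Ediv_spec₁ E w y.1.1 (h.trans hτ)).trans (Γ.t_comp _ _ _).symm) ?_
      calc E.ract w (Γ.comp (Ediv E w y.1.1 (h.trans hτ)) δ hcomp)
            ((Ediv_spec₁ E w y.1.1 (h.trans hτ)).trans (Γ.t_comp _ _ _).symm)
          = E.ract (E.ract w (Ediv E w y.1.1 (h.trans hτ))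
              (Ediv_spec₁ E w y.1.1 (h.trans hτ))) δ
              ((E.σ_ract _ _ _).trans hcomp) :=
            (E.ract_comp w _ δ _ hcomp).symm
        _ = E.ract y.1.1 δ h1 :=
            E.ract_congr (Ediv_spec₂ E w y.1.1 (h.trans hτ)) rfl _ _
        _ = x.1.1 := hx.symm
    calc B.gact (Ediv E w x.1.1 h) x.1.2 ((Ediv_sdiv E w x.1.1 h).trans x.2)
        = B.gact (Γ.comp (Ediv E w y.1.1 (h.trans hτ)) δ hcomp) x.1.2
            ((Γ.s_comp _ _ _).trans h2) := B.gact_congr hdiv.symm rfl _ _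
      _ = B.gact (Ediv E w y.1.1 (h.trans hτ)) (B.gact δ x.1.2 h2)
            (hcomp.trans (B.gact_proj _ _ _).symm) :=
          (B.gact_comp _ δ x.1.2 hcomp h2).symm
      _ = B.gact (Ediv E w y.1.1 (h.trans hτ)) y.1.2
            ((Ediv_sdiv E w y.1.1 (h.trans hτ)).trans y.2) :=
          B.gact_congr rfl hy.symm _ _
  · rw [dif_neg h, dif_neg (fun hh => h (hh.trans hτ.symm))]

/-- The counit on the inner quotient. -/
def mInner (E : GenHom Γ' Γ) {P : Type} (B : GpdBundle G Γ P)
    (w : E.Z) : IndP E B → Option P :=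
  Quotient.lift (mAux E B w) (fun _ _ h => mAux_resp E B w h)

theorem mInner_mk (E : GenHom Γ' Γ) {P : Type} (B : GpdBundle G Γ P)
    (w : E.Z) (x : indS E B) (h : E.τ w = E.τ x.1.1) :
    mInner E B w (indMk E B x) =
      some (B.gact (Ediv E w x.1.1 h) x.1.2
        ((Ediv_sdiv E w x.1.1 h).trans x.2)) := by
  show mAux E B w x = _
  unfold mAux
  rw [dif_pos h]

theorem mInner_isSome (E : GenHom Γ' Γ) {P : Type} (B : GpdBundle G Γ P)
    (w : E.Z) (q : IndP E B) (h : E.τ w = indProj E B q) :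
    (mInner E B w q).isSome := by
  induction q using Quotient.ind
  rename_i x
  show (mInner E B w (indMk E B x)).isSome
  rw [mInner_mk E B w x h]
  rfl

theorem optget_congr {α : Type} {o₁ o₂ : Option α} (h : o₁ = o₂)
    (h₁ : o₁.isSome) (h₂ : o₂.isSome) : o₁.get h₁ = o₂.get h₂ := by
  subst h; rfl

theorem mInner_lact (E : GenHom Γ' Γ) {P : Type} (B : GpdBundle G Γ P)
    (w : E.Z) (γ' : Γ'.M) (q : IndP E B) (h1 : E.τ w = Γ'.t γ')
    (h2 : Γ'.s γ' = indProj E B q)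
    (hc : Γ'.s (Γ'.inv γ') = E.τ w) :
    mInner E B (E.lact (Γ'.inv γ') w hc) q = mInner E B w (indGact E B γ' q) := by
  induction q using Quotient.ind
  rename_i u
  -- h2 : Γ'.s γ' = E.τ u.1.1
  show mInner E B (E.lact (Γ'.inv γ') w hc) (indMk E B u) =
    mInner E B w (indGact E B γ' (indMk E B u))
  rw [indGact_mk E B γ' u h2]
  have cl : E.τ (E.lact (Γ'.inv γ') w hc) = E.τ u.1.1 :=
    (E.τ_lact _ _ _).trans ((Γ'.t_inv γ').trans h2)
  have cr : E.τ w = E.τ (E.lact γ' u.1.1 h2) :=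
    h1.trans (E.τ_lact γ' u.1.1 h2).symm
  rw [mInner_mk E B _ u cl,
    mInner_mk E B w ⟨(E.lact γ' u.1.1 h2, u.1.2),
      (E.σ_lact γ' u.1.1 h2).trans u.2⟩ cr]
  refine congrArg some ?_
  have hδ : Ediv E w (E.lact γ' u.1.1 h2) cr =
      Ediv E (E.lact (Γ'.inv γ') w hc) u.1.1 cl := by
    refine Ediv_uniq E _ u.1.1 cl _
      ((E.σ_lact _ _ _).trans (Ediv_spec₁ E w _ cr)) ?_
    calc E.ract (E.lact (Γ'.inv γ') w hc) (Ediv E w (E.lact γ' u.1.1 h2) cr)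
          ((E.σ_lact _ _ _).trans (Ediv_spec₁ E w _ cr))
        = E.lact (Γ'.inv γ') (E.ract w (Ediv E w (E.lact γ' u.1.1 h2) cr)
            (Ediv_spec₁ E w _ cr)) (hc.trans (E.τ_ract _ _ _).symm) :=
          E.act_comm (Γ'.inv γ') w _ hc (Ediv_spec₁ E w _ cr)
      _ = E.lact (Γ'.inv γ') (E.lact γ' u.1.1 h2)
            ((Γ'.s_inv γ').trans (E.τ_lact γ' u.1.1 h2).symm) :=
          E.lact_congr rfl (Ediv_spec₂ E w _ cr) _ _
      _ = u.1.1 := E.lact_lact_inv γ' u.1.1 h2 _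
  exact B.gact_congr hδ.symm rfl _ _

/-- The unit comparison map `(Z ×_{Γ₀'} (Z ×_{Γ₀} P)/Γ)/Γ' → P`. -/
def unitFun (E : GenHom Γ' Γ) (hE : E.IsBiprincipal) {P : Type}
    (B : GpdBundle G Γ P) :
    IndP (E.flip hE) (indBundle E B) → P :=
  Quotient.lift
    (fun x => (mInner E B x.1.1 x.1.2).get (mInner_isSome E B x.1.1 x.1.2 x.2))
    (by
      rintro x y ⟨γ', h1, h2, hx, hy⟩
      have e1 : mInner E B x.1.1 x.1.2 = mInner E B y.1.1 y.1.2 := by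
        rw [hy, hx]
        exact mInner_lact E B y.1.1 γ' x.1.2 h1 h2 ((Γ'.s_inv γ').trans h1.symm)
      exact optget_congr e1 _ _)

theorem unitFun_mk (E : GenHom Γ' Γ) (hE : E.IsBiprincipal) {P : Type}
    (B : GpdBundle G Γ P) (w : E.Z) (u : indS E B)
    (hm : (E.flip hE).σ w = (indBundle E B).proj (indMk E B u))
    (h : E.τ w = E.τ u.1.1) :
    unitFun E hE B (indMk (E.flip hE) (indBundle E B) ⟨(w, indMk E B u), hm⟩) =
      B.gact (Ediv E w u.1.1 h) u.1.2 ((Ediv_sdiv E w u.1.1 h).trans u.2) :=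
  optget_eq (mInner_mk E B w u h) _

/-- The unit comparison as a bundle morphism. -/
def unitHom (E : GenHom Γ' Γ) (hE : E.IsBiprincipal) (G : Type) [Group G]
    (A : BdlObj G Γ) : (indObj (E.flip hE) G (indObj E G A)) ⟶ A := by
  refine ⟨unitFun E hE A.B, ?_, ?_, ?_⟩
  · refine Quotient.ind ?_
    rintro ⟨⟨w, q⟩, hm⟩
    induction q using Quotient.ind
    rename_i u
    show A.B.proj (unitFun E hE A.B
      (indMk (E.flip hE) (indBundle E A.B) ⟨(w, indMk E A.B u), hm⟩)) = E.σ w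
    rw [unitFun_mk E hE A.B w u hm hm]
    exact (A.B.gact_proj _ _ _).trans (Ediv_spec₁ E w u.1.1 hm).symm
  · refine Quotient.ind ?_
    rintro ⟨⟨w, q⟩, hm⟩
    induction q using Quotient.ind
    rename_i u
    intro g
    show unitFun E hE A.B (indMk (E.flip hE) (indBundle E A.B)
        ⟨(w, indMk E A.B ⟨(u.1.1, A.B.act u.1.2 g),
          u.2.trans (A.B.proj_act u.1.2 g).symm⟩), hm⟩) =
      A.B.act (unitFun E hE A.B
        (indMk (E.flip hE) (indBundle E A.B) ⟨(w, indMk E A.B u), hm⟩)) g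
    rw [unitFun_mk E hE A.B w u hm hm,
      unitFun_mk E hE A.B w ⟨(u.1.1, A.B.act u.1.2 g),
        u.2.trans (A.B.proj_act u.1.2 g).symm⟩ hm hm]
    exact A.B.gact_act _ u.1.2 g _
  · intro δ
    refine Quotient.ind ?_
    rintro ⟨⟨w, q⟩, hm⟩
    induction q using Quotient.ind
    rename_i u
    intro h h'
    -- h : Γ.s δ = E.σ w
    show unitFun E hE A.B (indGact (E.flip hE) (indBundle E A.B) δ
        (indMk (E.flip hE) (indBundle E A.B) ⟨(w, indMk E A.B u), hm⟩)) =
      A.B.gact δ (unitFun E hE A.B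
        (indMk (E.flip hE) (indBundle E A.B) ⟨(w, indMk E A.B u), hm⟩)) h'
    rw [indGact_mk (E.flip hE) (indBundle E A.B) δ
      ⟨(w, indMk E A.B u), hm⟩ h]
    have hm2 : (E.flip hE).σ ((E.flip hE).lact δ w h) =
        (indBundle E A.B).proj (indMk E A.B u) :=
      ((E.flip hE).σ_lact δ w h).trans hm
    rw [unitFun_mk E hE A.B ((E.flip hE).lact δ w h) u hm2 hm2]
    -- now compare the two division elements
    have hcc : Γ.s δ = Γ.t (Ediv E w u.1.1 hm) :=
      h.trans (Ediv_spec₁ E w u.1.1 hm)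
    have hδ : Γ.comp δ (Ediv E w u.1.1 hm) hcc =
        Ediv E ((E.flip hE).lact δ w h) u.1.1 hm2 := by
      refine Ediv_uniq E _ u.1.1 hm2 _
        ((E.σ_ract w (Γ.inv δ) (h.symm.trans (Γ.t_inv δ).symm)).trans
          ((Γ.s_inv δ).trans (Γ.t_comp δ _ hcc).symm)) ?_
      calc E.ract (E.ract w (Γ.inv δ) (h.symm.trans (Γ.t_inv δ).symm))
            (Γ.comp δ (Ediv E w u.1.1 hm) hcc)
            ((E.σ_ract w (Γ.inv δ) _).trans ((Γ.s_inv δ).trans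
              (Γ.t_comp δ _ hcc).symm))
          = E.ract (E.ract (E.ract w (Γ.inv δ) (h.symm.trans (Γ.t_inv δ).symm))
              δ ((E.σ_ract w (Γ.inv δ) _).trans (Γ.s_inv δ)))
              (Ediv E w u.1.1 hm) ((E.σ_ract _ δ _).trans hcc) :=
            (E.ract_comp _ δ (Ediv E w u.1.1 hm) _ hcc).symm
        _ = E.ract w (Ediv E w u.1.1 hm) (Ediv_spec₁ E w u.1.1 hm) :=
            E.ract_congr (E.ract_inv_ract w δ (h.symm.trans (Γ.t_inv δ).symm) _)
              rfl _ _
        _ = u.1.1 := Ediv_spec₂ E w u.1.1 hm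
    calc A.B.gact (Ediv E ((E.flip hE).lact δ w h) u.1.1 hm2) u.1.2
          ((Ediv_sdiv E _ u.1.1 hm2).trans u.2)
        = A.B.gact (Γ.comp δ (Ediv E w u.1.1 hm) hcc) u.1.2
            ((Γ.s_comp _ _ _).trans ((Ediv_sdiv E w u.1.1 hm).trans u.2)) :=
          A.B.gact_congr hδ.symm rfl _ _
      _ = A.B.gact δ (A.B.gact (Ediv E w u.1.1 hm) u.1.2
            ((Ediv_sdiv E w u.1.1 hm).trans u.2))
            (hcc.trans (A.B.gact_proj _ _ _).symm) :=
          (A.B.gact_comp δ _ u.1.2 hcc _).symm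
      _ = A.B.gact δ (unitFun E hE A.B (indMk (E.flip hE) (indBundle E A.B)
            ⟨(w, indMk E A.B u), hm⟩)) h' :=
          A.B.gact_congr rfl (unitFun_mk E hE A.B w u hm hm).symm _ h'

theorem unitHom_natural (E : GenHom Γ' Γ) (hE : E.IsBiprincipal) (G : Type)
    [Group G] {A₁ A₂ : BdlObj G Γ} (f : A₁ ⟶ A₂) :
    ((indFun E G ⋙ indFun (E.flip hE) G).map f ≫ unitHom E hE G A₂) =
      ((unitHom E hE G A₁) ≫ f) := by
  refine Subtype.ext (funext ?_)
  refine Quotient.ind ?_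
  rintro ⟨⟨w, q⟩, hm⟩
  induction q using Quotient.ind
  rename_i u
  show unitFun E hE A₂.B (indMk (E.flip hE) (indBundle E A₂.B)
      ⟨(w, indMk E A₂.B ⟨(u.1.1, f.1 u.1.2), u.2.trans (f.2.1 u.1.2).symm⟩),
        hm⟩) =
    f.1 (unitFun E hE A₁.B (indMk (E.flip hE) (indBundle E A₁.B)
      ⟨(w, indMk E A₁.B u), hm⟩))
  rw [unitFun_mk E hE A₂.B w ⟨(u.1.1, f.1 u.1.2), u.2.trans (f.2.1 u.1.2).symm⟩
      hm hm, unitFun_mk E hE A₁.B w u hm hm]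
  exact (f.2.2.2 (Ediv E w u.1.1 hm) u.1.2 _ _).symm

/-- The unit natural isomorphism `F ⋙ G ≅ 𝟭`. -/
def unitNatIso (E : GenHom Γ' Γ) (hE : E.IsBiprincipal) (G : Type) [Group G] :
    (indFun E G ⋙ indFun (E.flip hE) G) ≅ CategoryTheory.Functor.id (BdlObj G Γ) :=
  CategoryTheory.NatIso.ofComponents
    (fun A => @CategoryTheory.asIso _ _ _ _ (unitHom E hE G A)
      (bdl_isIso (unitHom E hE G A)))
    (fun f => unitHom_natural E hE G f)

/-- Component of the comparison between double flip and original bibundle. -/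
def flipFlipHom (E : GenHom Γ' Γ) (hE : E.IsBiprincipal) (G : Type) [Group G]
    (A : BdlObj G Γ) :
    (indObj ((E.flip hE).flip (E.flip_biprincipal hE)) G A) ⟶ (indObj E G A) := by
  set D := E.flip hE
  set hD := E.flip_biprincipal hE
  refine ⟨Quotient.lift (fun x => indMk E A.B x) ?_, ?_, ?_, ?_⟩
  · rintro x y ⟨δ, h1, h2, hx, hy⟩
    exact indMk_eq E A.B ⟨δ, h1, h2,
      hx.trans (E.ract_congr rfl (Gpd.inv_inv δ) _ h1), hy⟩
  · exact Quotient.ind (fun x => rfl)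
  · exact Quotient.ind (fun x g => rfl)
  · intro γ
    refine Quotient.ind ?_
    intro x h h'
    show Quotient.lift (fun x => indMk E A.B x) _
        (indGact (D.flip hD) A.B γ (indMk (D.flip hD) A.B x)) =
      indGact E A.B γ (indMk E A.B x)
    rw [indGact_mk (D.flip hD) A.B γ x h, indGact_mk E A.B γ x h]
    show indMk E A.B _ = indMk E A.B _
    exact congrArg (indMk E A.B) (Subtype.ext
      (Prod.ext (E.lact_congr (Gpd.inv_inv γ) rfl _ h) rfl))

/-- Inverse component of the comparison. -/
def flipFlipInv (E : GenHom Γ' Γ) (hE : E.IsBiprincipal) (G : Type) [Group G]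
    (A : BdlObj G Γ) :
    (indObj E G A) ⟶ (indObj ((E.flip hE).flip (E.flip_biprincipal hE)) G A) := by
  set D := E.flip hE
  set hD := E.flip_biprincipal hE
  refine ⟨Quotient.lift (fun x => indMk (D.flip hD) A.B x) ?_, ?_, ?_, ?_⟩
  · rintro x y ⟨δ, h1, h2, hx, hy⟩
    exact indMk_eq (D.flip hD) A.B ⟨δ, h1, h2,
      hx.trans (E.ract_congr rfl (Gpd.inv_inv δ).symm _ _), hy⟩
  · exact Quotient.ind (fun x => rfl)
  · exact Quotient.ind (fun x g => rfl)
  · intro γ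
    refine Quotient.ind ?_
    intro x h h'
    show Quotient.lift (fun x => indMk (D.flip hD) A.B x) _
        (indGact E A.B γ (indMk E A.B x)) =
      indGact (D.flip hD) A.B γ (indMk (D.flip hD) A.B x)
    rw [indGact_mk E A.B γ x h, indGact_mk (D.flip hD) A.B γ x h]
    show indMk (D.flip hD) A.B _ = indMk (D.flip hD) A.B _
    exact congrArg (indMk (D.flip hD) A.B) (Subtype.ext
      (Prod.ext (E.lact_congr (Gpd.inv_inv γ).symm rfl h _) rfl))

/-- Comparison between the double flip and the original bibundle. -/
def flipFlipIso (E : GenHom Γ' Γ) (hE : E.IsBiprincipal) (G : Type) [Group G] :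
    indFun ((E.flip hE).flip (E.flip_biprincipal hE)) G ≅ indFun E G :=
  CategoryTheory.NatIso.ofComponents
    (fun A =>
      { hom := flipFlipHom E hE G A
        inv := flipFlipInv E hE G A
        hom_inv_id := Subtype.ext (funext (Quotient.ind (fun x => rfl)))
        inv_hom_id := Subtype.ext (funext (Quotient.ind (fun x => rfl))) })
    (fun f => Subtype.ext (funext (Quotient.ind (fun x => rfl))))

/-- The Morita-invariance equivalence of bundle categories. -/
def moritaEquiv (E : GenHom Γ' Γ) (hE : E.IsBiprincipal) (G : Type) [Group G] :
    BdlObj G Γ ≌ BdlObj G Γ' :=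
  CategoryTheory.Equivalence.mk (indFun E G) (indFun (E.flip hE) G)
    (unitNatIso E hE G).symm
    ((CategoryTheory.Functor.isoWhiskerLeft (indFun (E.flip hE) G)
        (flipFlipIso E hE G).symm) ≪≫
      unitNatIso (E.flip hE) (E.flip_biprincipal hE) G)

end Counit

end Induced

/-- **Proposition 2.13 and its corollary.**
For a Lie groupoid `Γ ⇉ Γ₀`, the category of principal `G`-bundles over
`Γ ⇉ Γ₀` is equivalent to the category of generalized homomorphisms from
`Γ ⇉ Γ₀` to `G ⇉ ·`.  Consequently, Morita equivalent groupoids `Γ'`, `Γ` have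
equivalent categories of principal `G`-bundles. -/
theorem bundles_equiv_generalized_homs (G : Type) [Group G] (Γ Γ' : Gpd) :
    Nonempty (BdlObj G Γ ≌ GHObj Γ G) ∧
      (Morita Γ' Γ → Nonempty (BdlObj G Γ' ≌ BdlObj G Γ)) := by
  refine ⟨⟨bdlEquivGH G Γ⟩, ?_⟩
  rintro ⟨E, hE⟩
  exact ⟨(moritaEquiv E hE G).symm⟩

end
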